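/- Let W be a module with complementary pairs a ⊤ u, a ⊤ x, b ⊤ v, b ⊤ z. Then the operators L_{xavb} := 1 − P_a^x P_v^b and R_{aubz} := 1 − P_b^z P_u^a commute, and their product equals M_{xabz} M_{uabv} where M_{xabz} := P_x^a − P_b^z; that is, L_{xavb} ∘ R_{aubz} = (P_x^a − P_b^z) ∘ (P_u^a − P_b^v) = R_{aubz} ∘ L_{xavb}. -/

import Mathlib

/-- The projector of `W` onto `x` along `a`, as an endomorphism of `W`. -/
noncomputable def prj {R : Type*} [Ring R] {W : Type*} [AddCommGroup W] [Module R W]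
    (x a : Submodule R W) (h : IsCompl x a) : W →ₗ[R] W :=
  x.subtype ∘ₗ x.linearProjOfIsCompl a h

lemma prj_comp_prj {R : Type*} [Ring R] {W : Type*} [AddCommGroup W] [Module R W]
    (x u a : Submodule R W) (h : IsCompl x a) (h' : IsCompl u a) :
    prj x a h ∘ₗ prj u a h' = prj x a h := by
  ext w
  simp only [LinearMap.comp_apply, LinearMap.id_coe, id_eq]
  have hmem : w - prj u a h' w ∈ a := by
    have h1 := Submodule.projection_add_projection_eq_self h' w
    have h2 : w - prj u a h' w = (a.projectionOnto u h'.symm w : W) := by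
      simp only [prj, LinearMap.comp_apply, Submodule.coe_subtype]
      rw [sub_eq_iff_eq_add']; exact h1.symm
    rw [h2]; exact Submodule.coe_mem _
  have hz : prj x a h (w - prj u a h' w) = 0 := by
    show (x.subtype) (x.projectionOnto a h (w - prj u a h' w)) = 0
    rw [Submodule.projectionOnto_apply_of_mem_right h hmem, map_zero]
  rw [map_sub, sub_eq_zero] at hz
  exact hz.symm

lemma prj_comp_prj_assoc {R : Type*} [Ring R] {W : Type*} [AddCommGroup W] [Module R W]
    (x u a : Submodule R W) (h : IsCompl x a) (h' : IsCompl u a) (f : W →ₗ[R] W) :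
    prj x a h ∘ₗ (prj u a h' ∘ₗ f) = prj x a h ∘ₗ f := by
  rw [← LinearMap.comp_assoc, prj_comp_prj]

lemma prj_add_prj {R : Type*} [Ring R] {W : Type*} [AddCommGroup W] [Module R W]
    (x a : Submodule R W) (h : IsCompl x a) :
    prj x a h + prj a x h.symm = LinearMap.id := by
  ext w
  exact Submodule.projection_add_projection_eq_self h w

theorem fundamental_relation {R : Type*} [Ring R] {W : Type*} [AddCommGroup W]
    [Module R W] (x a u v b z : Submodule R W)
    (hxa : IsCompl x a) (hua : IsCompl u a) (hvb : IsCompl v b) (hzb : IsCompl z b) :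
    let L : W →ₗ[R] W := LinearMap.id - prj a x hxa.symm ∘ₗ prj v b hvb
    let Rop : W →ₗ[R] W := LinearMap.id - prj b z hzb.symm ∘ₗ prj u a hua
    let M₁ : W →ₗ[R] W := prj x a hxa - prj b z hzb.symm
    let M₂ : W →ₗ[R] W := prj u a hua - prj b v hvb.symm
    L ∘ₗ Rop = M₁ ∘ₗ M₂ ∧ Rop ∘ₗ L = M₁ ∘ₗ M₂ := by
  intro L Rop M₁ M₂
  have ea : prj a x hxa.symm = LinearMap.id - prj x a hxa :=
    eq_sub_of_add_eq' (prj_add_prj x a hxa)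
  have ev : prj b v hvb.symm = LinearMap.id - prj v b hvb :=
    eq_sub_of_add_eq' (prj_add_prj v b hvb)
  have ez : prj b z hzb.symm = LinearMap.id - prj z b hzb :=
    eq_sub_of_add_eq' (prj_add_prj z b hzb)
  constructor <;>
    · simp only [L, Rop, M₁, M₂, ea, ev, ez, LinearMap.comp_sub, LinearMap.sub_comp,
        LinearMap.id_comp, LinearMap.comp_id, LinearMap.comp_assoc,
        prj_comp_prj, prj_comp_prj_assoc]
      abel
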